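/- Let H be a complex Hilbert space and let E be a map assigning to each Borel set σ ⊆ ℂ a bounded linear operator E(σ) on H such that: (i) E(ℂ) = 1; (ii) E(σ₁ ∩ σ₂) = E(σ₁)E(σ₂) for all Borel σ₁, σ₂ (in particular each E(σ) is idempotent); (iii) for every sequence of pairwise disjoint Borel sets σ₁, σ₂, …, and every x ∈ H, the series Σᵢ E(σᵢ)x converges in H to E(⋃ᵢ σᵢ)x; and (iv) sup{‖E(σ)‖ : σ Borel} < ∞. Then there exists a positive, invertible bounded operator A on H such that for every Borel set σ the operator A E(σ) A⁻¹ is self-adjoint, and such that A commutes with every unitary operator U on H that commutes with E(σ) for every Borel σ. -/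

import Mathlib

open scoped ComplexOrder

local notation "⟪" x ", " y "⟫" => @inner ℂ _ _ x y

noncomputable def sgnC (b : Bool) : ℂ := if b then 1 else -1

lemma sgnC_mul_self (b : Bool) : sgnC b * sgnC b = 1 := by cases b <;> simp [sgnC]

lemma sgnC_not (b : Bool) : sgnC (!b) = - sgnC b := by cases b <;> simp [sgnC]

lemma sgnC_conj (b : Bool) : (starRingEnd ℂ) (sgnC b) = sgnC b := by cases b <;> simp [sgnC]

lemma sum_sgn_orthog {ι : Type*} [Fintype ι] [DecidableEq ι] {f g : ι} (h : f ≠ g) :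
    ∑ ε : ι → Bool, sgnC (ε f) * sgnC (ε g) = 0 := by
  apply Finset.sum_involution
    (fun ε (_ : ε ∈ (Finset.univ : Finset (ι → Bool))) => Function.update ε f (!(ε f)))
  · intro ε _
    rw [Function.update_self, Function.update_of_ne (Ne.symm h), sgnC_not]
    ring
  · intro ε _ _ hcontra
    have := congrFun hcontra f
    rw [Function.update_self] at this
    exact (Bool.not_ne_self (ε f)) this
  · intro ε _; exact Finset.mem_univ _
  · intro ε _
    funext z
    by_cases hz : z = f
    · subst hz; simp [Function.update_self]
    · simp [Function.update_of_ne hz]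

lemma sign_identity {H : Type*} [NormedAddCommGroup H] [InnerProductSpace ℂ H]
    {ι : Type*} [Fintype ι] [DecidableEq ι] (v : ι → H) :
    ∑ ε : ι → Bool, ⟪∑ f, sgnC (ε f) • v f, ∑ f, sgnC (ε f) • v f⟫
      = (2 : ℂ) ^ (Fintype.card ι) * ∑ f, ⟪v f, v f⟫ := by
  have expand : ∀ ε : ι → Bool,
      ⟪∑ f, sgnC (ε f) • v f, ∑ f, sgnC (ε f) • v f⟫
        = ∑ f, ∑ g, (sgnC (ε f) * sgnC (ε g)) * ⟪v f, v g⟫ := by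
    intro ε
    rw [sum_inner]
    refine Finset.sum_congr rfl fun f _ => ?_
    rw [inner_sum]
    refine Finset.sum_congr rfl fun g _ => ?_
    rw [inner_smul_left, inner_smul_right, sgnC_conj]
    ring
  calc ∑ ε : ι → Bool, ⟪∑ f, sgnC (ε f) • v f, ∑ f, sgnC (ε f) • v f⟫
      = ∑ ε : ι → Bool, ∑ f, ∑ g, (sgnC (ε f) * sgnC (ε g)) * ⟪v f, v g⟫ :=
        Finset.sum_congr rfl fun ε _ => expand ε
    _ = ∑ f, ∑ g, (∑ ε : ι → Bool, sgnC (ε f) * sgnC (ε g)) * ⟪v f, v g⟫ := by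
        rw [Finset.sum_comm]
        refine Finset.sum_congr rfl fun f _ => ?_
        rw [Finset.sum_comm]
        refine Finset.sum_congr rfl fun g _ => ?_
        rw [Finset.sum_mul]
    _ = ∑ f, (∑ ε : ι → Bool, sgnC (ε f) * sgnC (ε f)) * ⟪v f, v f⟫ := by
        refine Finset.sum_congr rfl fun f _ => ?_
        rw [Finset.sum_eq_single f]
        · intro g _ hg; rw [sum_sgn_orthog (Ne.symm hg), zero_mul]
        · intro h; exact absurd (Finset.mem_univ f) h
    _ = (2 : ℂ) ^ (Fintype.card ι) * ∑ f, ⟪v f, v f⟫ := by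
        rw [Finset.mul_sum]
        refine Finset.sum_congr rfl fun f _ => ?_
        have h1 : ∑ ε : ι → Bool, sgnC (ε f) * sgnC (ε f) = (2 : ℂ) ^ (Fintype.card ι) := by
          rw [Finset.sum_congr rfl fun ε _ => sgnC_mul_self (ε f), Finset.sum_const,
            Finset.card_univ]
          simp [Fintype.card_fun]
        rw [h1]

section Aux

variable {H : Type*} [NormedAddCommGroup H] [InnerProductSpace ℂ H] [CompleteSpace H]

abbrev MSet : Type := {σ : Set ℂ // MeasurableSet σ}

noncomputable def atomOf (s : Finset MSet) (f : {σ : MSet // σ ∈ s} → Bool) : Set ℂ :=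
  ⋂ σ : {σ : MSet // σ ∈ s}, if f σ then σ.1.1 else σ.1.1ᶜ

lemma atomOf_measurable (s : Finset MSet) (f : {σ : MSet // σ ∈ s} → Bool) :
    MeasurableSet (atomOf s f) := by
  apply MeasurableSet.iInter
  intro σ
  by_cases h : f σ <;> simp [h, σ.1.2, σ.1.2.compl]

lemma mem_atomOf {s : Finset MSet} {f : {σ : MSet // σ ∈ s} → Bool} {x : ℂ} :
    x ∈ atomOf s f ↔ ∀ σ : {σ : MSet // σ ∈ s}, (f σ = true ↔ x ∈ σ.1.1) := by
  simp only [atomOf, Set.mem_iInter]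
  constructor
  · intro h σ
    have := h σ
    by_cases hf : f σ <;> simp_all
  · intro h σ
    have := h σ
    by_cases hf : f σ <;> simp_all

lemma atomOf_disjoint {s : Finset MSet} {f g : {σ : MSet // σ ∈ s} → Bool} (h : f ≠ g) :
    Disjoint (atomOf s f) (atomOf s g) := by
  rw [Set.disjoint_left]
  intro x hxf hxg
  rw [mem_atomOf] at hxf hxg
  apply h
  funext σ
  have h1 := hxf σ; have h2 := hxg σ
  rw [Bool.eq_iff_iff]
  exact h1.trans h2.symm

open Classical in
lemma atomOf_iUnion_filter {s : Finset MSet} (σ₀ : {σ : MSet // σ ∈ s}) :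
    ⋃ f ∈ Finset.univ.filter (fun f : {σ : MSet // σ ∈ s} → Bool => f σ₀ = true),
      atomOf s f = σ₀.1.1 := by
  apply Set.Subset.antisymm
  · refine Set.iUnion₂_subset fun f hf => ?_
    intro x hx
    rw [mem_atomOf] at hx
    exact (hx σ₀).1 (Finset.mem_filter.1 hf).2
  · intro x hx
    refine Set.mem_iUnion₂.2
      ⟨fun σ : {σ : MSet // σ ∈ s} => decide (x ∈ σ.1.1), ?_, ?_⟩
    · simp only [Finset.mem_filter, Finset.mem_univ, true_and, decide_eq_true_eq]
      exact hx
    · rw [mem_atomOf]; intro σ; simp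

open Classical in
lemma atomOf_iUnion_univ (s : Finset MSet) :
    ⋃ f ∈ (Finset.univ : Finset ({σ : MSet // σ ∈ s} → Bool)), atomOf s f = Set.univ := by
  apply Set.eq_univ_of_forall
  intro x
  refine Set.mem_iUnion₂.2
    ⟨fun σ : {σ : MSet // σ ∈ s} => decide (x ∈ σ.1.1), Finset.mem_univ _, ?_⟩
  rw [mem_atomOf]; intro σ; simp

variable (E : Set ℂ → (H →L[ℂ] H))

lemma aux_empty
    (hE3 : ∀ σ : ℕ → Set ℂ, (∀ i, MeasurableSet (σ i)) →
      Pairwise (Function.onFun Disjoint σ) → ∀ x : H,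
        Filter.Tendsto (fun n => ∑ i ∈ Finset.range n, E (σ i) x) Filter.atTop
          (nhds (E (⋃ i, σ i) x))) :
    E ∅ = 0 := by
  ext x
  have h := hE3 (fun _ => ∅) (fun _ => MeasurableSet.empty)
    (fun i j _ => disjoint_bot_left) x
  simp only [Set.iUnion_empty] at h
  have h' : Filter.Tendsto (fun n : ℕ => ∑ i ∈ Finset.range (n+1), E ∅ x) Filter.atTop
      (nhds (E ∅ x)) := h.comp (Filter.tendsto_add_atTop_nat 1)
  have hdiff : Filter.Tendsto (fun n : ℕ =>
      (∑ i ∈ Finset.range (n+1), E ∅ x) - ∑ i ∈ Finset.range n, E ∅ x) Filter.atTop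
      (nhds (E ∅ x - E ∅ x)) := h'.sub h
  have heq : (fun n : ℕ => (∑ i ∈ Finset.range (n+1), E ∅ x) - ∑ i ∈ Finset.range n, E ∅ x)
      = fun _ => E ∅ x := by
    funext n
    rw [Finset.sum_range_succ]
    abel
  rw [heq, sub_self] at hdiff
  have := tendsto_nhds_unique tendsto_const_nhds hdiff
  simpa using this

lemma aux_add2 (hE0 : E ∅ = 0)
    (hE3 : ∀ σ : ℕ → Set ℂ, (∀ i, MeasurableSet (σ i)) →
      Pairwise (Function.onFun Disjoint σ) → ∀ x : H,
        Filter.Tendsto (fun n => ∑ i ∈ Finset.range n, E (σ i) x) Filter.atTop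
          (nhds (E (⋃ i, σ i) x)))
    {σ τ : Set ℂ} (hσ : MeasurableSet σ) (hτ : MeasurableSet τ) (hd : Disjoint σ τ) :
    E (σ ∪ τ) = E σ + E τ := by
  ext x
  classical
  set seq : ℕ → Set ℂ := fun n => if n = 0 then σ else if n = 1 then τ else ∅ with hseq
  have hmeas : ∀ i, MeasurableSet (seq i) := by
    intro i; rcases i with _ | _ | i <;> simp [hseq, hσ, hτ]
  have hdis : Pairwise (Function.onFun Disjoint seq) := by
    intro i j hij
    unfold Function.onFun
    rcases i with _ | _ | i <;> rcases j with _ | _ | j <;>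
      simp only [hseq] <;> first
        | omega
        | simp [hd, hd.symm, Set.disjoint_empty, Set.empty_disjoint]
  have hU : (⋃ i, seq i) = σ ∪ τ := by
    apply Set.Subset.antisymm
    · refine Set.iUnion_subset fun i => ?_
      rcases i with _ | _ | i <;> simp [hseq]
    · intro y hy
      rcases hy with hy | hy
      · exact Set.mem_iUnion.2 ⟨0, by simp [hseq, hy]⟩
      · exact Set.mem_iUnion.2 ⟨1, by simp [hseq, hy]⟩
  have h := hE3 seq hmeas hdis x
  rw [hU] at h
  have hconst : ∀ n, 2 ≤ n → ∑ i ∈ Finset.range n, E (seq i) x = E σ x + E τ x := by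
    intro n hn
    induction n with
    | zero => omega
    | succ m ih =>
      rcases Nat.lt_or_ge m 2 with hm | hm
      · interval_cases m
        · omega
        · simp [Finset.sum_range_succ, Finset.sum_range_one, hseq]
      · rw [Finset.sum_range_succ, ih (by omega)]
        have hm' : seq m = ∅ := by
          have hne : m ≠ 0 ∧ m ≠ 1 := by omega
          simp [hseq, hne.1, hne.2]
        rw [hm', hE0]
        simp
  have h2 : Filter.Tendsto (fun n => ∑ i ∈ Finset.range n, E (seq i) x) Filter.atTop
      (nhds (E σ x + E τ x)) := by
    apply Filter.Tendsto.congr' _ tendsto_const_nhds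
    filter_upwards [Filter.eventually_ge_atTop 2] with n hn
    exact (hconst n hn).symm
  have := tendsto_nhds_unique h h2
  simpa using this

lemma aux_addFin (hE0 : E ∅ = 0)
    (hadd2 : ∀ {σ τ : Set ℂ}, MeasurableSet σ → MeasurableSet τ → Disjoint σ τ →
      E (σ ∪ τ) = E σ + E τ)
    {ι : Type*} [DecidableEq ι] (t : Finset ι) (p : ι → Set ℂ)
    (hm : ∀ i ∈ t, MeasurableSet (p i))
    (hd : ∀ i ∈ t, ∀ j ∈ t, i ≠ j → Disjoint (p i) (p j)) :
    E (⋃ i ∈ t, p i) = ∑ i ∈ t, E (p i) := by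
  induction t using Finset.induction_on with
  | empty => simpa using hE0
  | @insert a t ha ih =>
    have hma : MeasurableSet (p a) := hm a (Finset.mem_insert_self a t)
    have hmt : ∀ i ∈ t, MeasurableSet (p i) := fun i hi => hm i (Finset.mem_insert_of_mem hi)
    have hmU : MeasurableSet (⋃ i ∈ t, p i) :=
      MeasurableSet.biUnion t.countable_toSet hmt
    have hdisj : Disjoint (p a) (⋃ i ∈ t, p i) := by
      rw [Set.disjoint_iUnion₂_right]
      intro i hi
      exact hd a (Finset.mem_insert_self a t) i (Finset.mem_insert_of_mem hi)
        (fun h => ha (h ▸ hi))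
    rw [Finset.set_biUnion_insert, hadd2 hma hmU hdisj, Finset.sum_insert ha,
      ih hmt (fun i hi j hj hij => hd i (Finset.mem_insert_of_mem hi) j
        (Finset.mem_insert_of_mem hj) hij)]

lemma V_sq {P : H →L[ℂ] H} (hP : P * P = P) :
    ((2:ℂ) • P - 1) * ((2:ℂ) • P - 1) = 1 := by
  have h : ((2:ℂ) • P - 1) * ((2:ℂ) • P - 1)
      = (4:ℂ) • (P * P) - (4:ℂ) • P + 1 := by
    simp only [mul_sub, sub_mul, smul_mul_assoc, mul_smul_comm, smul_smul, one_mul, mul_one]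
    module
  rw [h, hP]
  module

lemma V_bound {M : ℝ} (hE4 : ∀ σ : Set ℂ, MeasurableSet σ → ‖E σ‖ ≤ M)
    {τ : Set ℂ} (hτ : MeasurableSet τ) (u : H) :
    ‖((2:ℂ) • E τ - 1) u‖ ≤ (2*M+1) * ‖u‖ := by
  have h : ((2:ℂ) • E τ - 1) u = (2:ℂ) • (E τ u) - u := by
    simp [ContinuousLinearMap.sub_apply]
  rw [h]
  calc ‖(2:ℂ) • (E τ u) - u‖ ≤ ‖(2:ℂ) • (E τ u)‖ + ‖u‖ := norm_sub_le _ _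
    _ = 2 * ‖E τ u‖ + ‖u‖ := by rw [norm_smul]; simp
    _ ≤ 2 * (M * ‖u‖) + ‖u‖ := by
        have h1 : ‖E τ u‖ ≤ ‖E τ‖ * ‖u‖ := (E τ).le_opNorm u
        have h2 : ‖E τ‖ * ‖u‖ ≤ M * ‖u‖ :=
          mul_le_mul_of_nonneg_right (hE4 τ hτ) (norm_nonneg u)
        nlinarith [norm_nonneg u]
    _ = (2*M+1) * ‖u‖ := by ring

lemma sign_op (hone : E Set.univ = 1) {ι : Type*} [Fintype ι] [DecidableEq ι]
    (p : ι → Set ℂ) (hm : ∀ i, MeasurableSet (p i))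
    (haddFin : ∀ c : Finset ι, E (⋃ i ∈ c, p i) = ∑ i ∈ c, E (p i))
    (huniv : ⋃ i ∈ (Finset.univ : Finset ι), p i = Set.univ)
    (ε : ι → Bool) :
    ∃ τ, MeasurableSet τ ∧ (∑ i, sgnC (ε i) • E (p i)) = (2:ℂ) • E τ - 1 := by
  classical
  refine ⟨⋃ i ∈ Finset.univ.filter (fun i => ε i = true), p i, ?_, ?_⟩
  · exact MeasurableSet.biUnion (Finset.countable_toSet _) (fun i _ => hm i)
  · have h2 : ∑ i, E (p i) = 1 := by rw [← haddFin Finset.univ, huniv, hone]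
    rw [haddFin]
    have hsplit := Finset.sum_filter_add_sum_filter_not Finset.univ
      (fun i => ε i = true) (fun i => E (p i))
    have hsplit' := Finset.sum_filter_add_sum_filter_not Finset.univ
      (fun i => ε i = true) (fun i => sgnC (ε i) • E (p i))
    have ht : ∑ i ∈ Finset.univ.filter (fun i => ε i = true), sgnC (ε i) • E (p i)
        = ∑ i ∈ Finset.univ.filter (fun i => ε i = true), E (p i) := by
      refine Finset.sum_congr rfl fun i hi => ?_
      have := (Finset.mem_filter.1 hi).2
      simp [sgnC, this]
    have hf : ∑ i ∈ Finset.univ.filter (fun i => ¬ ε i = true), sgnC (ε i) • E (p i)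
        = - ∑ i ∈ Finset.univ.filter (fun i => ¬ ε i = true), E (p i) := by
      rw [← Finset.sum_neg_distrib]
      refine Finset.sum_congr rfl fun i hi => ?_
      have := (Finset.mem_filter.1 hi).2
      simp [sgnC, this]
    set St := ∑ i ∈ Finset.univ.filter (fun i => ε i = true), E (p i)
    set Sf := ∑ i ∈ Finset.univ.filter (fun i => ¬ ε i = true), E (p i)
    have hSt : St + Sf = 1 := by rw [hsplit, h2]
    have hL : ∑ i, sgnC (ε i) • E (p i) = St - Sf := by
      rw [← hsplit', ht, hf]; abel
    rw [hL, ← hSt]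
    module

lemma partition_bound {M : ℝ} (hM0 : 0 ≤ M)
    (hVbd : ∀ {τ : Set ℂ}, MeasurableSet τ → ∀ u : H,
      ‖((2:ℂ) • E τ - 1) u‖ ≤ (2*M+1) * ‖u‖)
    (hVsq : ∀ {τ : Set ℂ}, MeasurableSet τ →
      ((2:ℂ) • E τ - 1) * ((2:ℂ) • E τ - 1) = 1)
    {ι : Type*} [Fintype ι] [DecidableEq ι] (p : ι → Set ℂ)
    (hsign : ∀ ε : ι → Bool, ∃ τ, MeasurableSet τ ∧
      (∑ i, sgnC (ε i) • E (p i)) = (2:ℂ) • E τ - 1)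
    (x : H) :
    ‖x‖^2 ≤ (2*M+1)^2 * ∑ i, ‖E (p i) x‖^2
      ∧ ∑ i, ‖E (p i) x‖^2 ≤ (2*M+1)^2 * ‖x‖^2 := by
  classical
  set K := 2*M+1 with hK
  have hK0 : (0:ℝ) < K := by rw [hK]; linarith
  set v : ι → H := fun i => E (p i) x with hv
  set w : (ι → Bool) → H := fun ε => ∑ i, sgnC (ε i) • v i with hw
  have hwV : ∀ ε : ι → Bool, ∃ τ, MeasurableSet τ ∧ w ε = ((2:ℂ) • E τ - 1) x := by
    intro ε
    obtain ⟨τ, hτ, heq⟩ := hsign ε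
    refine ⟨τ, hτ, ?_⟩
    rw [hw]
    simp only [hv]
    calc ∑ i, sgnC (ε i) • (E (p i)) x
        = (∑ i, sgnC (ε i) • E (p i)) x := by
          rw [ContinuousLinearMap.sum_apply]
          exact Finset.sum_congr rfl fun i _ => rfl
      _ = ((2:ℂ) • E τ - 1) x := by rw [heq]
  have hub : ∀ ε : ι → Bool, ‖w ε‖ ≤ K * ‖x‖ := by
    intro ε
    obtain ⟨τ, hτ, heq⟩ := hwV ε
    rw [heq]; exact hVbd hτ x
  have hlb : ∀ ε : ι → Bool, ‖x‖ ≤ K * ‖w ε‖ := by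
    intro ε
    obtain ⟨τ, hτ, heq⟩ := hwV ε
    have hx : ((2:ℂ) • E τ - 1) (w ε) = x := by
      rw [heq, ← ContinuousLinearMap.mul_apply, hVsq hτ, ContinuousLinearMap.one_apply]
    calc ‖x‖ = ‖((2:ℂ) • E τ - 1) (w ε)‖ := by rw [hx]
      _ ≤ K * ‖w ε‖ := hVbd hτ _
  have hidC := sign_identity (H := H) v
  have hidR : ∑ ε : ι → Bool, ‖w ε‖^2 = 2 ^ (Fintype.card ι) * ∑ i, ‖v i‖^2 := by
    have hcast : ((∑ ε : ι → Bool, ‖w ε‖^2 : ℝ) : ℂ)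
        = ((2 ^ (Fintype.card ι) * ∑ i, ‖v i‖^2 : ℝ) : ℂ) := by
      push_cast
      calc ((∑ ε : ι → Bool, (‖w ε‖:ℂ)^2))
          = ∑ ε : ι → Bool, ⟪w ε, w ε⟫ :=
            Finset.sum_congr rfl fun ε _ => (inner_self_eq_norm_sq_to_K (w ε)).symm
        _ = (2 : ℂ) ^ (Fintype.card ι) * ∑ i, ⟪v i, v i⟫ := hidC
        _ = 2 ^ (Fintype.card ι) * ∑ i, (‖v i‖:ℂ)^2 := by
            congr 1
            exact Finset.sum_congr rfl fun i _ => (inner_self_eq_norm_sq_to_K (v i))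
    exact_mod_cast hcast
  set n := Fintype.card ι
  have hcard : (Finset.univ : Finset (ι → Bool)).card = 2 ^ n := by
    simp [Finset.card_univ, Fintype.card_fun]; rfl
  have h2n : (0:ℝ) < 2 ^ n := by positivity
  constructor
  · have hmain : (2:ℝ)^n * ‖x‖^2 ≤ (2:ℝ)^n * (K^2 * ∑ i, ‖v i‖^2) := by
      calc (2:ℝ)^n * ‖x‖^2 = ∑ _ε : ι → Bool, ‖x‖^2 := by
            rw [Finset.sum_const, hcard, nsmul_eq_mul]; push_cast; ring
        _ ≤ ∑ ε : ι → Bool, K^2 * ‖w ε‖^2 := by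
            refine Finset.sum_le_sum fun ε _ => ?_
            have := hlb ε
            nlinarith [norm_nonneg (w ε), norm_nonneg x]
        _ = K^2 * ∑ ε : ι → Bool, ‖w ε‖^2 := by rw [Finset.mul_sum]
        _ = K^2 * (2^n * ∑ i, ‖v i‖^2) := by rw [hidR]
        _ = (2:ℝ)^n * (K^2 * ∑ i, ‖v i‖^2) := by ring
    exact le_of_mul_le_mul_left hmain h2n
  · have hmain : (2:ℝ)^n * (∑ i, ‖v i‖^2) ≤ (2:ℝ)^n * (K^2 * ‖x‖^2) := by
      calc (2:ℝ)^n * ∑ i, ‖v i‖^2 = ∑ ε : ι → Bool, ‖w ε‖^2 := hidR.symm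
        _ ≤ ∑ _ε : ι → Bool, K^2 * ‖x‖^2 := by
            refine Finset.sum_le_sum fun ε _ => ?_
            have := hub ε
            nlinarith [norm_nonneg (w ε), norm_nonneg x]
        _ = (2:ℝ)^n * (K^2 * ‖x‖^2) := by
            rw [Finset.sum_const, hcard, nsmul_eq_mul]; push_cast; ring
    exact le_of_mul_le_mul_left hmain h2n

end Aux


set_option maxHeartbeats 1600000 in
open Filter in
/-- Proposition 3.2: every bounded idempotent-valued spectral measure on a complex Hilbert
space is similar, via a positive invertible operator `A`, to a self-adjoint spectral
measure; moreover `A` commutes with every unitary commuting with all the `E(σ)`. -/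
theorem idempotent_spectral_measure_similar_to_selfadjoint
    {H : Type*} [NormedAddCommGroup H] [InnerProductSpace ℂ H] [CompleteSpace H]
    (E : Set ℂ → (H →L[ℂ] H))
    (hE1 : E Set.univ = 1)
    (hE2 : ∀ σ₁ σ₂ : Set ℂ, MeasurableSet σ₁ → MeasurableSet σ₂ →
      E (σ₁ ∩ σ₂) = E σ₁ * E σ₂)
    (hE3 : ∀ σ : ℕ → Set ℂ, (∀ i, MeasurableSet (σ i)) →
      Pairwise (Function.onFun Disjoint σ) → ∀ x : H,
        Filter.Tendsto (fun n => ∑ i ∈ Finset.range n, E (σ i) x) Filter.atTop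
          (nhds (E (⋃ i, σ i) x)))
    (M : ℝ) (hE4 : ∀ σ : Set ℂ, MeasurableSet σ → ‖E σ‖ ≤ M) :
    ∃ A B : H →L[ℂ] H,
      (∀ x : H, 0 ≤ ⟪A x, x⟫) ∧
      A * B = 1 ∧ B * A = 1 ∧
      (∀ σ : Set ℂ, MeasurableSet σ → IsSelfAdjoint (A * E σ * B)) ∧
      (∀ U : H →L[ℂ] H, U * star U = 1 → star U * U = 1 →
        (∀ σ : Set ℂ, MeasurableSet σ → U * E σ = E σ * U) → U * A = A * U) := by
  classical
  have hM0 : 0 ≤ M := le_trans (norm_nonneg _) (hE4 _ MeasurableSet.univ)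
  have hK0 : (0:ℝ) < 2*M+1 := by linarith
  have hidem : ∀ {σ : Set ℂ}, MeasurableSet σ → E σ * E σ = E σ := by
    intro σ h; rw [← hE2 σ σ h h, Set.inter_self]
  have hE0 : E ∅ = 0 := aux_empty E hE3
  have hadd2 : ∀ {σ τ : Set ℂ}, MeasurableSet σ → MeasurableSet τ → Disjoint σ τ →
      E (σ ∪ τ) = E σ + E τ := fun hσ hτ hd => aux_add2 E hE0 hE3 hσ hτ hd
  have hVsq : ∀ {τ : Set ℂ}, MeasurableSet τ →
      ((2:ℂ) • E τ - 1) * ((2:ℂ) • E τ - 1) = 1 := fun hτ => V_sq (hidem hτ)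
  have hVbd : ∀ {τ : Set ℂ}, MeasurableSet τ → ∀ u : H,
      ‖((2:ℂ) • E τ - 1) u‖ ≤ (2*M+1) * ‖u‖ := fun hτ u => V_bound E hE4 hτ u
  -- atoms
  have haddFin_atom : ∀ (s : Finset MSet) (c : Finset ({σ : MSet // σ ∈ s} → Bool)),
      E (⋃ f ∈ c, atomOf s f) = ∑ f ∈ c, E (atomOf s f) := fun s c =>
    aux_addFin E hE0 (fun hσ hτ hd => hadd2 hσ hτ hd) c _ (fun f _ => atomOf_measurable s f)
      (fun f _ g _ hfg => atomOf_disjoint hfg)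
  have hsign : ∀ (s : Finset MSet) (ε : ({σ : MSet // σ ∈ s} → Bool) → Bool),
      ∃ τ, MeasurableSet τ ∧
        (∑ f, sgnC (ε f) • E (atomOf s f)) = (2:ℂ) • E τ - 1 := fun s ε =>
    sign_op E hE1 _ (fun f => atomOf_measurable s f) (haddFin_atom s)
      (atomOf_iUnion_univ s) ε
  have hbound : ∀ (s : Finset MSet) (x : H),
      ‖x‖^2 ≤ (2*M+1)^2 * ∑ f, ‖E (atomOf s f) x‖^2
        ∧ ∑ f, ‖E (atomOf s f) x‖^2 ≤ (2*M+1)^2 * ‖x‖^2 :=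
    fun s x => partition_bound E hM0 hVbd hVsq (atomOf s) (hsign s) x
  have hprod : ∀ (s : Finset MSet) (f : {σ : MSet // σ ∈ s} → Bool)
      (σ₀ : {σ : MSet // σ ∈ s}),
      E (atomOf s f) * E σ₀.1.1 = if f σ₀ = true then E (atomOf s f) else 0 := by
    intro s f σ₀
    rw [← hE2 _ _ (atomOf_measurable s f) σ₀.1.2]
    by_cases h : f σ₀ = true
    · have hsub : atomOf s f ⊆ σ₀.1.1 := fun x hx => (mem_atomOf.1 hx σ₀).1 h
      rw [Set.inter_eq_self_of_subset_left hsub]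
      simp [h]
    · have hsub : atomOf s f ∩ σ₀.1.1 = ∅ := by
        rw [Set.eq_empty_iff_forall_notMem]
        rintro x ⟨hx1, hx2⟩
        exact h ((mem_atomOf.1 hx1 σ₀).2 hx2)
      rw [hsub, hE0]
      simp [h]
  -- the quadratic forms
  set φs : Finset MSet → H → H → ℂ :=
    fun s x y => ∑ f : {σ : MSet // σ ∈ s} → Bool,
      ⟪E (atomOf s f) x, E (atomOf s f) y⟫ with hφsdef
  have hCS : ∀ (s : Finset MSet) (x y : H), ‖φs s x y‖ ≤ (2*M+1)^2 * (‖x‖ * ‖y‖) := by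
    intro s x y
    have h1 : ‖φs s x y‖ ≤ ∑ f : {σ : MSet // σ ∈ s} → Bool,
        ‖E (atomOf s f) x‖ * ‖E (atomOf s f) y‖ := by
      refine le_trans (norm_sum_le _ _) (Finset.sum_le_sum fun f _ => ?_)
      exact norm_inner_le_norm _ _
    have h2 : (∑ f : {σ : MSet // σ ∈ s} → Bool,
        ‖E (atomOf s f) x‖ * ‖E (atomOf s f) y‖)^2
        ≤ ((2*M+1)^2 * (‖x‖ * ‖y‖))^2 := by
      refine le_trans (Finset.sum_mul_sq_le_sq_mul_sq _ _ _) ?_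
      have hx := (hbound s x).2
      have hy := (hbound s y).2
      calc (∑ f : {σ : MSet // σ ∈ s} → Bool, ‖E (atomOf s f) x‖^2)
            * ∑ f : {σ : MSet // σ ∈ s} → Bool, ‖E (atomOf s f) y‖^2
          ≤ ((2*M+1)^2 * ‖x‖^2) * ((2*M+1)^2 * ‖y‖^2) := by
            have hxnn : (0:ℝ) ≤ ∑ f : {σ : MSet // σ ∈ s} → Bool, ‖E (atomOf s f) x‖^2 :=
              Finset.sum_nonneg fun f _ => sq_nonneg _
            have hynn : (0:ℝ) ≤ ∑ f : {σ : MSet // σ ∈ s} → Bool, ‖E (atomOf s f) y‖^2 :=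
              Finset.sum_nonneg fun f _ => sq_nonneg _
            have hxb : (0:ℝ) ≤ (2*M+1)^2 * ‖x‖^2 := by positivity
            exact mul_le_mul hx hy hynn hxb
        _ = ((2*M+1)^2 * (‖x‖ * ‖y‖))^2 := by ring
    have hsnn : (0:ℝ) ≤ ∑ f : {σ : MSet // σ ∈ s} → Bool,
        ‖E (atomOf s f) x‖ * ‖E (atomOf s f) y‖ :=
      Finset.sum_nonneg fun f _ => mul_nonneg (norm_nonneg _) (norm_nonneg _)
    have hbnn : (0:ℝ) ≤ (2*M+1)^2 * (‖x‖ * ‖y‖) := by positivity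
    have := Real.sqrt_le_sqrt h2
    rw [Real.sqrt_sq hsnn, Real.sqrt_sq hbnn] at this
    exact le_trans h1 this
  -- ultrafilter limit
  haveI : Filter.NeBot (Filter.atTop : Filter (Finset MSet)) := inferInstance
  set 𝒰 : Ultrafilter (Finset MSet) := Ultrafilter.of Filter.atTop with h𝒰def
  have h𝒰le : (𝒰 : Filter (Finset MSet)) ≤ Filter.atTop := Ultrafilter.of_le _
  have hconv : ∀ x y : H, ∃ z : ℂ,
      Filter.Tendsto (fun s => φs s x y) (𝒰 : Filter (Finset MSet)) (nhds z) := by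
    intro x y
    have hmem : ∀ s, φs s x y ∈ Metric.closedBall (0:ℂ) ((2*M+1)^2 * (‖x‖ * ‖y‖)) := by
      intro s; rw [Metric.mem_closedBall, dist_zero_right]; exact hCS s x y
    have hle : (Ultrafilter.map (fun s => φs s x y) 𝒰 : Filter ℂ)
        ≤ Filter.principal (Metric.closedBall (0:ℂ) ((2*M+1)^2 * (‖x‖ * ‖y‖))) := by
      rw [Ultrafilter.coe_map, Filter.le_principal_iff, Filter.mem_map]
      exact Filter.univ_mem' hmem
    obtain ⟨z, _, hz⟩ := (isCompact_closedBall (0:ℂ) _).ultrafilter_le_nhds _ hle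
    refine ⟨z, ?_⟩
    rwa [Ultrafilter.coe_map] at hz
  choose φ hφ using hconv
  -- properties of φ
  have hbd : ∀ x y, ‖φ x y‖ ≤ (2*M+1)^2 * (‖x‖ * ‖y‖) := by
    intro x y
    exact le_of_tendsto (hφ x y).norm (Filter.Eventually.of_forall fun s => hCS s x y)
  have haddx : ∀ x x' y, φ (x + x') y = φ x y + φ x' y := by
    intro x x' y
    refine tendsto_nhds_unique (hφ _ _) ?_
    have heq : (fun s => φs s (x + x') y) = fun s => φs s x y + φs s x' y := by
      funext s
      rw [hφsdef, ← Finset.sum_add_distrib]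
      exact Finset.sum_congr rfl fun f _ => by rw [map_add, inner_add_left]
    rw [heq]
    exact (hφ x y).add (hφ x' y)
  have hsmulx : ∀ (c : ℂ) x y, φ (c • x) y = (starRingEnd ℂ) c * φ x y := by
    intro c x y
    refine tendsto_nhds_unique (hφ _ _) ?_
    have heq : (fun s => φs s (c • x) y) = fun s => (starRingEnd ℂ) c * φs s x y := by
      funext s
      rw [hφsdef, Finset.mul_sum]
      exact Finset.sum_congr rfl fun f _ => by rw [map_smul, inner_smul_left]
    rw [heq]
    exact (hφ x y).const_mul _
  have haddy : ∀ x y y', φ x (y + y') = φ x y + φ x y' := by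
    intro x y y'
    refine tendsto_nhds_unique (hφ _ _) ?_
    have heq : (fun s => φs s x (y + y')) = fun s => φs s x y + φs s x y' := by
      funext s
      rw [hφsdef, ← Finset.sum_add_distrib]
      exact Finset.sum_congr rfl fun f _ => by rw [map_add, inner_add_right]
    rw [heq]
    exact (hφ x y).add (hφ x y')
  have hsmuly : ∀ (c : ℂ) x y, φ x (c • y) = c * φ x y := by
    intro c x y
    refine tendsto_nhds_unique (hφ _ _) ?_
    have heq : (fun s => φs s x (c • y)) = fun s => c * φs s x y := by
      funext s
      rw [hφsdef, Finset.mul_sum]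
      exact Finset.sum_congr rfl fun f _ => by rw [map_smul, inner_smul_right]
    rw [heq]
    exact (hφ x y).const_mul _
  have hsymm : ∀ x y, φ y x = (starRingEnd ℂ) (φ x y) := by
    intro x y
    refine tendsto_nhds_unique (hφ _ _) ?_
    have heq : (fun s => φs s y x) = fun s => (starRingEnd ℂ) (φs s x y) := by
      funext s
      rw [hφsdef, map_sum]
      exact Finset.sum_congr rfl fun f _ => (inner_conj_symm _ _).symm
    rw [heq]
    exact (Complex.continuous_conj.tendsto _).comp (hφ x y)
  have hreal : ∀ x : H, (φ x x).im = 0 ∧ ‖x‖^2 ≤ (2*M+1)^2 * (φ x x).re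
      ∧ (φ x x).re ≤ (2*M+1)^2 * ‖x‖^2 := by
    intro x
    set C : Set ℂ := {z : ℂ | z.im = 0 ∧ ‖x‖^2 ≤ (2*M+1)^2 * z.re
      ∧ z.re ≤ (2*M+1)^2 * ‖x‖^2} with hC
    have hclosed : IsClosed C := by
      rw [hC]
      simp only [Set.setOf_and]
      refine IsClosed.inter (isClosed_eq Complex.continuous_im continuous_const) ?_
      exact IsClosed.inter
        (isClosed_le continuous_const (continuous_const.mul Complex.continuous_re))
        (isClosed_le Complex.continuous_re continuous_const)
    have hmem : ∀ s, φs s x x ∈ C := by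
      intro s
      have heq : φs s x x
          = ((∑ f : {σ : MSet // σ ∈ s} → Bool, ‖E (atomOf s f) x‖^2 : ℝ) : ℂ) := by
        rw [hφsdef]
        push_cast
        exact Finset.sum_congr rfl fun f _ => inner_self_eq_norm_sq_to_K _
      rw [heq, hC]
      simp only [Set.mem_setOf_eq]
      refine ⟨Complex.ofReal_im _, ?_, ?_⟩
      · rw [Complex.ofReal_re]; exact (hbound s x).1
      · rw [Complex.ofReal_re]; exact (hbound s x).2
    exact hclosed.mem_of_tendsto (hφ x x) (Filter.Eventually.of_forall hmem)
  have hinvE : ∀ {σ : Set ℂ} (hσ : MeasurableSet σ) (x y : H),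
      φ (E σ x) y = φ x (E σ y) := by
    intro σ hσ x y
    refine tendsto_nhds_unique (hφ _ _) ?_
    have hev : ∀ᶠ s in (𝒰 : Filter (Finset MSet)), φs s (E σ x) y = φs s x (E σ y) := by
      refine Filter.Eventually.filter_mono h𝒰le ?_
      filter_upwards [Filter.eventually_ge_atTop ({⟨σ, hσ⟩} : Finset MSet)] with s hs
      have hmem : (⟨σ, hσ⟩ : MSet) ∈ s := Finset.singleton_subset_iff.1 hs
      set σ₀ : {q : MSet // q ∈ s} := ⟨⟨σ, hσ⟩, hmem⟩ with hσ₀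
      rw [hφsdef]
      refine Finset.sum_congr rfl fun f _ => ?_
      have h1 : E (atomOf s f) (E σ x) = (E (atomOf s f) * E σ₀.1.1) x := rfl
      have h2 : E (atomOf s f) (E σ y) = (E (atomOf s f) * E σ₀.1.1) y := rfl
      rw [h1, h2, hprod s f σ₀]
      by_cases h : f σ₀ = true
      · simp [h]
      · simp [h]
    exact Filter.Tendsto.congr' (hev.mono fun s h => h.symm) (hφ x (E σ y))
  have hinvU : ∀ (U : H →L[ℂ] H), star U * U = 1 →
      (∀ σ : Set ℂ, MeasurableSet σ → U * E σ = E σ * U) →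
      ∀ x y, φ (U x) (U y) = φ x y := by
    intro U hU2 hcomm x y
    have hUinner : ∀ a b : H, ⟪U a, U b⟫ = ⟪a, b⟫ := by
      intro a b
      have h1 : ⟪(ContinuousLinearMap.adjoint U) (U a), b⟫ = ⟪U a, U b⟫ :=
        ContinuousLinearMap.adjoint_inner_left U b (U a)
      have h2 : (ContinuousLinearMap.adjoint U) (U a) = a := by
        rw [← ContinuousLinearMap.star_eq_adjoint, ← ContinuousLinearMap.mul_apply, hU2,
          ContinuousLinearMap.one_apply]
      rw [h2] at h1
      exact h1.symm
    refine tendsto_nhds_unique (hφ _ _) ?_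
    have heq : (fun s => φs s (U x) (U y)) = fun s => φs s x y := by
      funext s
      rw [hφsdef]
      refine Finset.sum_congr rfl fun f _ => ?_
      have h1 : E (atomOf s f) (U x) = U (E (atomOf s f) x) := by
        rw [← ContinuousLinearMap.mul_apply, ← hcomm _ (atomOf_measurable s f),
          ContinuousLinearMap.mul_apply]
      have h2 : E (atomOf s f) (U y) = U (E (atomOf s f) y) := by
        rw [← ContinuousLinearMap.mul_apply, ← hcomm _ (atomOf_measurable s f),
          ContinuousLinearMap.mul_apply]
      rw [h1, h2, hUinner]
    rw [heq]
    exact hφ x y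
  -- build the operator T from the limit form
  have hbd' : ∀ x y, ‖φ x y‖ ≤ ((2*M+1)^2 * ‖x‖) * ‖y‖ := by
    intro x y
    calc ‖φ x y‖ ≤ (2*M+1)^2 * (‖x‖ * ‖y‖) := hbd x y
      _ = ((2*M+1)^2 * ‖x‖) * ‖y‖ := by ring
  set lin : H → (H →ₗ[ℂ] ℂ) := fun x =>
    { toFun := fun y => φ x y
      map_add' := haddy x
      map_smul' := fun c y => by simpa using hsmuly c x y } with hlindef
  set T0 : H → H := fun x => (InnerProductSpace.toDual ℂ H).symm
    (LinearMap.mkContinuous (lin x) ((2*M+1)^2 * ‖x‖) (hbd' x)) with hT0def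
  have hT0 : ∀ x y, ⟪T0 x, y⟫ = φ x y := by
    intro x y
    rw [hT0def]
    exact InnerProductSpace.toDual_symm_apply
  have hT0norm : ∀ x, ‖T0 x‖ ≤ (2*M+1)^2 * ‖x‖ := by
    intro x
    rw [hT0def]
    rw [LinearIsometryEquiv.norm_map]
    exact LinearMap.mkContinuous_norm_le (lin x) (by positivity) (hbd' x)
  set T : H →L[ℂ] H := LinearMap.mkContinuous
    { toFun := T0
      map_add' := fun x x' => by
        refine ext_inner_right ℂ fun v => ?_
        rw [inner_add_left, hT0, hT0, hT0, haddx]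
      map_smul' := fun c x => by
        refine ext_inner_right ℂ fun v => ?_
        rw [RingHom.id_apply, inner_smul_left, hT0, hT0, hsmulx] }
    ((2*M+1)^2) (fun x => hT0norm x) with hTdef
  have hT : ∀ x y, ⟪T x, y⟫ = φ x y := fun x y => hT0 x y
  -- symmetry and positivity of T
  have hTsym : ∀ x y, ⟪T x, y⟫ = ⟪x, T y⟫ := by
    intro x y
    rw [hT, ← inner_conj_symm x (T y), hT, hsymm x y, Complex.conj_conj]
  have hTsa : IsSelfAdjoint T :=
    ContinuousLinearMap.isSelfAdjoint_iff_isSymmetric.2 (fun x y => hTsym x y)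
  have hTre : ∀ x : H, (⟪T x, x⟫).im = 0 ∧ ‖x‖^2 ≤ (2*M+1)^2 * (⟪T x, x⟫).re
      ∧ (⟪T x, x⟫).re ≤ (2*M+1)^2 * ‖x‖^2 := by
    intro x
    have h := hreal x
    rw [← hT x x] at h
    exact h
  have hTpos : T.IsPositive := by
    refine ⟨ContinuousLinearMap.isSelfAdjoint_iff_isSymmetric.1 hTsa, fun x => ?_⟩
    rw [ContinuousLinearMap.reApplyInnerSelf_apply]
    have h := (hTre x).2.1
    have hx2 : (0:ℝ) ≤ ‖x‖^2 := sq_nonneg _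
    have hKK : (0:ℝ) < (2*M+1)^2 := by positivity
    show (0:ℝ) ≤ RCLike.re ⟪T x, x⟫
    rw [RCLike.re_to_complex]
    nlinarith
  have hTnonneg : (0 : H →L[ℂ] H) ≤ T := (ContinuousLinearMap.nonneg_iff_isPositive T).2 hTpos
  -- intertwining relations
  have hTP : ∀ {σ : Set ℂ}, MeasurableSet σ → T * E σ = star (E σ) * T := by
    intro σ hσ
    refine ContinuousLinearMap.ext fun x => ?_
    refine ext_inner_right ℂ fun y => ?_
    rw [ContinuousLinearMap.mul_apply, hT]
    rw [ContinuousLinearMap.mul_apply, ContinuousLinearMap.star_eq_adjoint,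
      ContinuousLinearMap.adjoint_inner_left (E σ) y (T x), hT]
    exact hinvE hσ x y
  have hTU : ∀ (U : H →L[ℂ] H), U * star U = 1 → star U * U = 1 →
      (∀ σ : Set ℂ, MeasurableSet σ → U * E σ = E σ * U) → U * T = T * U := by
    intro U hU1 hU2 hcomm
    have h3 : star U * T * U = T := by
      refine ContinuousLinearMap.ext fun x => ?_
      refine ext_inner_right ℂ fun y => ?_
      have he : (star U * T * U) x = star U (T (U x)) := rfl
      rw [he, ContinuousLinearMap.star_eq_adjoint,
        ContinuousLinearMap.adjoint_inner_left U y (T (U x)), hT, hT]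
      exact hinvU U hU2 hcomm x y
    have h4 : U * (star U * T * U) = U * T := by rw [h3]
    have h5 : U * (star U * T * U) = T * U := by
      rw [show star U * T * U = star U * (T * U) from mul_assoc _ _ _,
        ← mul_assoc U (star U) (T * U), hU1, one_mul]
    rw [← h4, h5]
  -- invertibility of T
  set c : ℝ := ((2*M+1)^2)⁻¹ with hc
  have hKK : (0:ℝ) < (2*M+1)^2 := by positivity
  have hc0 : 0 < c := by positivity
  have hc1 : c ≤ 1 := by
    rw [hc]
    rw [inv_le_one_iff₀]
    right
    nlinarith
  set S : H →L[ℂ] H := 1 - (c:ℂ) • T with hSdef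
  have hSsa : IsSelfAdjoint S := by
    rw [hSdef]
    exact (IsSelfAdjoint.one _).sub (IsSelfAdjoint.smul (r := (c:ℂ)) (by rw [isSelfAdjoint_iff, Complex.star_def]; exact Complex.conj_ofReal c) hTsa)
  have hid_inner : ∀ x : H, (⟪x, x⟫).re = ‖x‖^2 := by
    intro x
    rw [inner_self_eq_norm_sq_to_K]
    norm_cast
  have hSinner : ∀ x : H, (⟪S x, x⟫).re = ‖x‖^2 - c * (⟪T x, x⟫).re := by
    intro x
    have hx : S x = x - (c:ℂ) • (T x) := by
      rw [hSdef]; simp [ContinuousLinearMap.sub_apply]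
    rw [hx, inner_sub_left, inner_smul_left, Complex.sub_re, Complex.conj_ofReal,
      Complex.re_ofReal_mul, hid_inner x]
  have hSpos : (0 : H →L[ℂ] H) ≤ S := by
    rw [ContinuousLinearMap.nonneg_iff_isPositive]
    refine ⟨ContinuousLinearMap.isSelfAdjoint_iff_isSymmetric.1 hSsa, fun x => ?_⟩
    rw [ContinuousLinearMap.reApplyInnerSelf_apply]
    show (0:ℝ) ≤ RCLike.re ⟪S x, x⟫
    rw [RCLike.re_to_complex, hSinner x]
    have h := (hTre x).2.2
    have hcK : c * (2*M+1)^2 = 1 := by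
      rw [hc]; field_simp
    nlinarith [mul_le_mul_of_nonneg_left h hc0.le, sq_nonneg ‖x‖]
  have hSle : S ≤ ((1 - c * c : ℝ) : ℂ) • 1 := by
    rw [ContinuousLinearMap.le_def]
    have hsub : ∀ x : H, (((1 - c * c : ℝ) : ℂ) • (1 : H →L[ℂ] H) - S) x
        = ((1 - c * c : ℝ) : ℂ) • x - S x := by
      intro x; simp [ContinuousLinearMap.sub_apply]
    refine ⟨?_, fun x => ?_⟩
    · have h1 : IsSelfAdjoint (((1 - c * c : ℝ) : ℂ) • (1 : H →L[ℂ] H)) :=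
        IsSelfAdjoint.smul (r := ((1 - c * c : ℝ) : ℂ))
          (by rw [isSelfAdjoint_iff, Complex.star_def]; exact Complex.conj_ofReal _)
          (IsSelfAdjoint.one _)
      simpa using ContinuousLinearMap.isSelfAdjoint_iff_isSymmetric.1 (h1.sub hSsa)
    · rw [ContinuousLinearMap.reApplyInnerSelf_apply]
      show (0:ℝ) ≤ RCLike.re ⟪(((1 - c * c : ℝ) : ℂ) • (1:H →L[ℂ] H) - S) x, x⟫
      rw [RCLike.re_to_complex, hsub x, inner_sub_left, inner_smul_left,
        Complex.conj_ofReal, Complex.sub_re, Complex.re_ofReal_mul,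
        hid_inner x, hSinner x]
      have h := (hTre x).2.1
      have hcK : c * (2*M+1)^2 = 1 := by
        rw [hc]; field_simp
      have h1 : c * ‖x‖^2 ≤ (⟪T x, x⟫).re := by
        have h' := mul_le_mul_of_nonneg_left h hc0.le
        rwa [← mul_assoc, hcK, one_mul] at h'
      have h2 : c * (c * ‖x‖^2) ≤ c * (⟪T x, x⟫).re := mul_le_mul_of_nonneg_left h1 hc0.le
      nlinarith [h2]
  have hSnorm : ‖S‖ < 1 := by
    have h1 : ‖S‖ ≤ ‖((1 - c * c : ℝ) : ℂ) • (1 : H →L[ℂ] H)‖ :=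
      CStarAlgebra.norm_le_norm_of_nonneg_of_le hSpos hSle
    have hcc : 0 ≤ 1 - c * c := by nlinarith
    have h2 : ‖((1 - c * c : ℝ) : ℂ) • (1 : H →L[ℂ] H)‖ ≤ (1 - c * c) * 1 := by
      rw [norm_smul, Complex.norm_real, Real.norm_eq_abs, abs_of_nonneg hcc]
      refine mul_le_mul_of_nonneg_left ?_ hcc
      rw [ContinuousLinearMap.one_def]
      exact ContinuousLinearMap.norm_id_le
    nlinarith
  have hTunit : IsUnit T := by
    have hu : IsUnit (1 - S) := (Units.oneSub S hSnorm).isUnit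
    have h1S : 1 - S = (c:ℂ) • T := by rw [hSdef, sub_sub_cancel]
    have hKne : (((2*M+1)^2 : ℝ) : ℂ) ≠ 0 := by
      exact_mod_cast ne_of_gt hKK
    have hTeq : T = (((2*M+1)^2 : ℝ) : ℂ) • ((c:ℂ) • T) := by
      rw [smul_smul, ← Complex.ofReal_mul, hc, mul_inv_cancel₀ (ne_of_gt hKK)]
      simp
    rw [hTeq, ← h1S]
    have := hu.smul (Units.mk0 (((2*M+1)^2 : ℝ) : ℂ) hKne)
    simpa [Units.smul_def] using this
  have hTspec : (0:NNReal) ∉ spectrum NNReal T := (spectrum.zero_notMem_iff NNReal).2 hTunit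
  -- the square root and its inverse
  set A : H →L[ℂ] H := CFC.sqrt T with hAdef
  set B : H →L[ℂ] H := cfc (fun t : NNReal => (NNReal.sqrt t)⁻¹) T with hBdef
  have hsqrt_ne : ∀ t ∈ spectrum NNReal T, NNReal.sqrt t ≠ 0 := by
    intro t ht h
    rw [NNReal.sqrt_eq_zero] at h
    exact hTspec (h ▸ ht)
  have hgcont : ContinuousOn (fun t : NNReal => (NNReal.sqrt t)⁻¹) (spectrum NNReal T) :=
    ContinuousOn.inv₀ NNReal.continuous_sqrt.continuousOn hsqrt_ne
  have hfcont : ContinuousOn (fun t : NNReal => NNReal.sqrt t) (spectrum NNReal T) :=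
    NNReal.continuous_sqrt.continuousOn
  have hAB : A * B = 1 := by
    rw [hAdef, hBdef, CFC.sqrt_eq_cfc, ← cfc_mul _ _ T hfcont hgcont]
    have heqon : Set.EqOn (fun t : NNReal => NNReal.sqrt t * (NNReal.sqrt t)⁻¹)
        (fun _ => 1) (spectrum NNReal T) := fun t ht => mul_inv_cancel₀ (hsqrt_ne t ht)
    rw [cfc_congr heqon, cfc_const_one NNReal T hTnonneg]
  have hBA : B * A = 1 := by
    rw [hAdef, hBdef, CFC.sqrt_eq_cfc, ← cfc_mul _ _ T hgcont hfcont]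
    have heqon : Set.EqOn (fun t : NNReal => (NNReal.sqrt t)⁻¹ * NNReal.sqrt t)
        (fun _ => 1) (spectrum NNReal T) := fun t ht => inv_mul_cancel₀ (hsqrt_ne t ht)
    rw [cfc_congr heqon, cfc_const_one NNReal T hTnonneg]
  have hApos : (0 : H →L[ℂ] H) ≤ A := CFC.sqrt_nonneg T
  have hAsa : IsSelfAdjoint A := IsSelfAdjoint.of_nonneg hApos
  have hBsa : IsSelfAdjoint B := IsSelfAdjoint.of_nonneg (cfc_predicate _ T)
  have hAA : A * A = T := CFC.sqrt_mul_sqrt_self T hTnonneg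
  -- first goal
  have goal1 : ∀ x : H, 0 ≤ ⟪A x, x⟫ := by
    intro x
    have hp := (ContinuousLinearMap.nonneg_iff_isPositive A).1 hApos
    obtain ⟨h1, h2⟩ := (ContinuousLinearMap.isPositive_iff_complex A).1 hp x
    rw [← h1]
    exact_mod_cast Complex.zero_le_real.2 h2
  -- self-adjointness goal
  have goalSA : ∀ σ : Set ℂ, MeasurableSet σ → IsSelfAdjoint (A * E σ * B) := by
    intro σ hσ
    have hTP' := hTP hσ
    have key : A * E σ * B = B * star (E σ) * A := by
      have h1 : B * (A * A) * (E σ) * B = A * E σ * B := by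
        rw [← mul_assoc B A A, hBA, one_mul]
      have h2 : B * (A * A) * (E σ) * B = B * star (E σ) * A := by
        rw [hAA, mul_assoc B T (E σ), hTP', ← mul_assoc B (star (E σ)) T, ← hAA,
          ← mul_assoc (B * star (E σ)) A A, mul_assoc (B * star (E σ) * A) A B, hAB, mul_one]
      rw [← h1, h2]
    have : star (A * E σ * B) = A * E σ * B := by
      calc star (A * E σ * B) = B * (star (E σ) * A) := by
            rw [star_mul, star_mul, hAsa.star_eq, hBsa.star_eq]
        _ = B * star (E σ) * A := by rw [mul_assoc]
        _ = A * E σ * B := key.symm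
    exact this
  -- commutation goal
  have goalComm : ∀ U : H →L[ℂ] H, U * star U = 1 → star U * U = 1 →
      (∀ σ : Set ℂ, MeasurableSet σ → U * E σ = E σ * U) → U * A = A * U := by
    intro U hU1 hU2 hcomm
    have hUT : U * T = T * U := hTU U hU1 hU2 hcomm
    have hsq : (U * A * star U) * (U * A * star U) = T := by
      calc (U * A * star U) * (U * A * star U)
          = U * A * ((star U * U) * (A * star U)) := by
            simp only [mul_assoc]
        _ = U * (A * A) * star U := by rw [hU2, one_mul]; simp only [mul_assoc]
        _ = U * T * star U := by rw [hAA]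
        _ = T * (U * star U) := by rw [hUT]; simp only [mul_assoc]
        _ = T := by rw [hU1, mul_one]
    have hpos' : (0 : H →L[ℂ] H) ≤ U * A * star U := by
      have h := star_left_conjugate_nonneg hApos (star U)
      rwa [star_star] at h
    have hAeq : A = U * A * star U := by
      rw [hAdef]
      exact CFC.sqrt_unique hsq hpos'
    calc U * A = U * A * (star U * U) := by rw [hU2, mul_one]
      _ = (U * A * star U) * U := by simp only [mul_assoc]
      _ = A * U := by rw [← hAeq]
  exact ⟨A, B, goal1, hAB, hBA, goalSA, goalComm⟩
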